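/- Let C₂ be a p × n real measurement matrix (each row contains exactly one entry equal to 1 and exactly one entry equal to −1 with all other entries 0, and C₂ has full row rank), and let F be an m × n real matrix. Then there exists an m × p real matrix K satisfying K C₂ = F if and only if there exists a family of vectors v_{ij} ∈ ℝ^m, indexed by pairs of distinct vertices i < j lying in a common connected component of the measurement graph of C₂, such that F x = Σ v_{ij} (x_i − x_j) for every x ∈ ℝ^n. -/

import Mathlib

open Matrix BigOperators

attribute [local instance] Classical.propDecidable

/-- `C₂` is a measurement matrix: each row contains exactly one entry equal to `1` and
exactly one entry equal to `-1`, all other entries are `0`, and `C₂` has full row rank. -/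
def IsMeasurementMatrix {p n : ℕ} (C₂ : Matrix (Fin p) (Fin n) ℝ) : Prop :=
  (∀ ℓ : Fin p, ∃ i j : Fin n, i ≠ j ∧ C₂ ℓ i = 1 ∧ C₂ ℓ j = -1 ∧
    ∀ k : Fin n, k ≠ i → k ≠ j → C₂ ℓ k = 0) ∧ C₂.rank = p

/-- The measurement graph of `C₂`: the simple graph on `{1,…,n}` with an edge between
distinct `i` and `j` exactly when some row `ℓ` has `C₂ ℓ i ≠ 0` and `C₂ ℓ j ≠ 0`. -/
def measGraph {p n : ℕ} (C₂ : Matrix (Fin p) (Fin n) ℝ) : SimpleGraph (Fin n) :=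
  SimpleGraph.fromRel (fun i j => ∃ ℓ : Fin p, C₂ ℓ i ≠ 0 ∧ C₂ ℓ j ≠ 0)

namespace MeasAux

/-- The "difference of basis vectors" vector `e_i - e_j`. -/
def Evec (n : ℕ) (i j : Fin n) : Fin n → ℝ := Pi.single i 1 - Pi.single j 1

lemma Evec_apply (n : ℕ) (i j k : Fin n) :
    Evec n i j k = (if k = i then (1:ℝ) else 0) - (if k = j then 1 else 0) := by
  simp [Evec, Pi.single_apply]

lemma Evec_trans (n : ℕ) (i b j : Fin n) : Evec n i j = Evec n i b + Evec n b j := by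
  funext k; simp [Evec_apply]

lemma Evec_neg (n : ℕ) (i j : Fin n) : Evec n i j = -Evec n j i := by
  funext k; simp [Evec_apply]

lemma Evec_self (n : ℕ) (i : Fin n) : Evec n i i = 0 := sub_self _

lemma Evec_dot (n : ℕ) (i j : Fin n) (x : Fin n → ℝ) :
    ∑ k, Evec n i j k * x k = x i - x j := by
  simp [Evec_apply, sub_mul, Finset.sum_sub_distrib, ite_mul]

lemma row_eq_Evec {p n : ℕ} (C₂ : Matrix (Fin p) (Fin n) ℝ) {ℓ : Fin p} {a b : Fin n}
    (hab : a ≠ b) (h1 : C₂ ℓ a = 1) (h2 : C₂ ℓ b = -1)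
    (h0 : ∀ k, k ≠ a → k ≠ b → C₂ ℓ k = 0) : C₂ ℓ = Evec n a b := by
  funext k
  rcases eq_or_ne k a with rfl | hka
  · simp [Evec_apply, h1, hab]
  · rcases eq_or_ne k b with rfl | hkb
    · simp [Evec_apply, h2, hka]
    · simp [Evec_apply, h0 k hka hkb, hka, hkb]

lemma adj_mem {p n : ℕ} (C₂ : Matrix (Fin p) (Fin n) ℝ) (hC : IsMeasurementMatrix C₂)
    {i j : Fin n} (h : (measGraph C₂).Adj i j) :
    Evec n i j ∈ Submodule.span ℝ (Set.range fun ℓ : Fin p => C₂ ℓ) := by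
  rw [measGraph, SimpleGraph.fromRel_adj] at h
  obtain ⟨hij, hor⟩ := h
  have hℓ : ∃ ℓ, C₂ ℓ i ≠ 0 ∧ C₂ ℓ j ≠ 0 := by
    rcases hor with ⟨ℓ, ha, hb⟩ | ⟨ℓ, ha, hb⟩ <;> exact ⟨ℓ, by tauto, by tauto⟩
  obtain ⟨ℓ, hi, hj⟩ := hℓ
  obtain ⟨a, b, hab, h1, h2, h0⟩ := hC.1 ℓ
  have hrow := row_eq_Evec C₂ hab h1 h2 h0
  have hia : i = a ∨ i = b := by
    by_contra hc; push_neg at hc; exact hi (h0 i hc.1 hc.2)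
  have hja : j = a ∨ j = b := by
    by_contra hc; push_neg at hc; exact hj (h0 j hc.1 hc.2)
  rcases hia with rfl | rfl <;> rcases hja with rfl | rfl
  · exact absurd rfl hij
  · rw [← hrow]; exact Submodule.subset_span ⟨ℓ, rfl⟩
  · have hE : Evec n i j = -(C₂ ℓ) := by rw [hrow]; exact Evec_neg n i j
    rw [hE]; exact neg_mem (Submodule.subset_span ⟨ℓ, rfl⟩)
  · exact absurd rfl hij

lemma reach_mem {p n : ℕ} (C₂ : Matrix (Fin p) (Fin n) ℝ) (hC : IsMeasurementMatrix C₂)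
    {i j : Fin n} (h : (measGraph C₂).Reachable i j) :
    Evec n i j ∈ Submodule.span ℝ (Set.range fun ℓ : Fin p => C₂ ℓ) := by
  obtain ⟨w⟩ := h
  induction w with
  | nil => rw [Evec_self]; exact zero_mem _
  | @cons i b j ha w ih =>
      rw [Evec_trans n i b j]
      exact add_mem (adj_mem C₂ hC ha) ih

/-- The generating family for the "relative" span, indexed by pairs. -/
noncomputable def gfun {p n : ℕ} (C₂ : Matrix (Fin p) (Fin n) ℝ) (q : Fin n × Fin n) :
    Fin n → ℝ :=
  if q.1 < q.2 ∧ (measGraph C₂).Reachable q.1 q.2 then Evec n q.1 q.2 else 0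

lemma gfun_mem_rowspan {p n : ℕ} (C₂ : Matrix (Fin p) (Fin n) ℝ)
    (hC : IsMeasurementMatrix C₂) (q : Fin n × Fin n) :
    gfun C₂ q ∈ Submodule.span ℝ (Set.range fun ℓ : Fin p => C₂ ℓ) := by
  unfold gfun
  split_ifs with h
  · exact reach_mem C₂ hC h.2
  · exact zero_mem _

lemma Evec_mem_gspan {p n : ℕ} (C₂ : Matrix (Fin p) (Fin n) ℝ)
    {i j : Fin n} (h : (measGraph C₂).Reachable i j) :
    Evec n i j ∈ Submodule.span ℝ (Set.range (gfun C₂)) := by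
  rcases lt_trichotomy i j with hlt | heq | hgt
  · have : gfun C₂ (i, j) = Evec n i j := if_pos ⟨hlt, h⟩
    rw [← this]; exact Submodule.subset_span ⟨(i, j), rfl⟩
  · subst heq; rw [Evec_self]; exact zero_mem _
  · have hg : gfun C₂ (j, i) = Evec n j i := if_pos ⟨hgt, h.symm⟩
    rw [Evec_neg n i j, ← hg]
    exact neg_mem (Submodule.subset_span ⟨(j, i), rfl⟩)

lemma row_mem_gspan {p n : ℕ} (C₂ : Matrix (Fin p) (Fin n) ℝ)
    (hC : IsMeasurementMatrix C₂) (ℓ : Fin p) :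
    C₂ ℓ ∈ Submodule.span ℝ (Set.range (gfun C₂)) := by
  obtain ⟨a, b, hab, h1, h2, h0⟩ := hC.1 ℓ
  rw [row_eq_Evec C₂ hab h1 h2 h0]
  refine Evec_mem_gspan C₂ ?_
  refine SimpleGraph.Adj.reachable ?_
  rw [measGraph, SimpleGraph.fromRel_adj]
  exact ⟨hab, Or.inl ⟨ℓ, by simp [h1], by simp [h2]⟩⟩

lemma single_sub (n : ℕ) (k i j : Fin n) :
    (Pi.single k 1 : Fin n → ℝ) i - (Pi.single k 1 : Fin n → ℝ) j = Evec n i j k := by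
  rw [Evec_apply]
  congr 1 <;> simp [Pi.single_apply, eq_comm]

lemma gfun_dot {p n : ℕ} (C₂ : Matrix (Fin p) (Fin n) ℝ) (q : Fin n × Fin n)
    (x : Fin n → ℝ) :
    ∑ k, gfun C₂ q k * x k =
      if q.1 < q.2 ∧ (measGraph C₂).Reachable q.1 q.2 then x q.1 - x q.2 else 0 := by
  unfold gfun
  split_ifs with h
  · exact Evec_dot n q.1 q.2 x
  · simp

end MeasAux

open MeasAux in
/-- For a measurement matrix `C₂` and an `m × n` matrix `F`, there exists
`K` with `K C₂ = F` iff `F` decomposes as a sum of relative maps over pairs `i < j`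
lying in a common connected component of the measurement graph of `C₂`. -/
theorem exists_factor_iff_relative_componentwise (m p n : ℕ)
    (C₂ : Matrix (Fin p) (Fin n) ℝ) (hC : IsMeasurementMatrix C₂)
    (F : Matrix (Fin m) (Fin n) ℝ) :
    (∃ K : Matrix (Fin m) (Fin p) ℝ, K * C₂ = F) ↔
    (∃ v : Fin n → Fin n → (Fin m → ℝ), ∀ x : Fin n → ℝ,
      F.mulVec x = ∑ i : Fin n, ∑ j : Fin n,
        if i < j ∧ (measGraph C₂).Reachable i j then (x i - x j) • v i j else 0) := by
  constructor
  · rintro ⟨K, hK⟩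
    have hmem : ∀ r, F r ∈ Submodule.span ℝ (Set.range (gfun C₂)) := by
      intro r
      have hfr : F r = ∑ ℓ, K r ℓ • C₂ ℓ := by
        funext k
        rw [← hK]
        simp [Matrix.mul_apply, Finset.sum_apply]
      rw [hfr]
      exact Submodule.sum_mem _ fun ℓ _ =>
        Submodule.smul_mem _ _ (row_mem_gspan C₂ hC ℓ)
    have hrep : ∀ r, ∃ c : Fin n × Fin n → ℝ, ∑ q, c q • gfun C₂ q = F r := by
      intro r
      exact (Submodule.mem_span_range_iff_exists_fun ℝ).mp (hmem r)
    choose c hc using hrep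
    refine ⟨fun i j r => c r (i, j), fun x => ?_⟩
    funext r
    have hfr : ∀ k, F r k = ∑ q, c r q * gfun C₂ q k := by
      intro k
      rw [← hc r]
      simp [Finset.sum_apply]
    have lhs : F.mulVec x r = ∑ q, c r q *
        (if q.1 < q.2 ∧ (measGraph C₂).Reachable q.1 q.2 then x q.1 - x q.2 else 0) := by
      unfold Matrix.mulVec dotProduct
      calc ∑ k, F r k * x k = ∑ k, (∑ q, c r q * gfun C₂ q k) * x k := by
            simp_rw [← hfr]
        _ = ∑ q, c r q * ∑ k, gfun C₂ q k * x k := by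
            simp_rw [Finset.sum_mul, Finset.mul_sum, mul_assoc]
            rw [Finset.sum_comm]
        _ = _ := by simp_rw [gfun_dot]
    rw [lhs, Fintype.sum_prod_type]
    simp only [Finset.sum_apply, ite_apply, Pi.zero_apply, Pi.smul_apply, smul_eq_mul]
    refine Finset.sum_congr rfl fun i _ => Finset.sum_congr rfl fun j _ => ?_
    by_cases h : i < j ∧ (measGraph C₂).Reachable i j
    · rw [if_pos h, if_pos h]; ring
    · rw [if_neg h, if_neg h, mul_zero]
  · rintro ⟨v, hv⟩
    have hFrk : ∀ r k, F r k = ∑ q : Fin n × Fin n, v q.1 q.2 r * gfun C₂ q k := by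
      intro r k
      have h1 : (F *ᵥ Pi.single k 1) r = F r k := by
        simp [Matrix.mulVec, dotProduct, Pi.single_apply, mul_ite]
      rw [← h1, hv (Pi.single k 1), Fintype.sum_prod_type]
      simp only [Finset.sum_apply, ite_apply, Pi.zero_apply, Pi.smul_apply, smul_eq_mul]
      refine Finset.sum_congr rfl fun i _ => Finset.sum_congr rfl fun j _ => ?_
      unfold gfun
      by_cases h : i < j ∧ (measGraph C₂).Reachable i j
      · rw [if_pos h, if_pos h, single_sub n k i j, mul_comm]
      · rw [if_neg h, if_neg h, Pi.zero_apply, mul_zero]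
    have hmem : ∀ r, F r ∈ Submodule.span ℝ (Set.range fun ℓ : Fin p => C₂ ℓ) := by
      intro r
      have hfr : F r = ∑ q : Fin n × Fin n, v q.1 q.2 r • gfun C₂ q := by
        funext k
        rw [hFrk r k]
        simp [Finset.sum_apply]
      rw [hfr]
      exact Submodule.sum_mem _ fun q _ =>
        Submodule.smul_mem _ _ (gfun_mem_rowspan C₂ hC q)
    have hrep : ∀ r, ∃ c : Fin p → ℝ, ∑ ℓ, c ℓ • C₂ ℓ = F r := by
      intro r
      exact (Submodule.mem_span_range_iff_exists_fun ℝ).mp (hmem r)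
    choose c hc using hrep
    refine ⟨fun r ℓ => c r ℓ, ?_⟩
    ext r k
    show ∑ ℓ, c r ℓ * C₂ ℓ k = F r k
    have := congrFun (hc r) k
    simpa [Finset.sum_apply] using this
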